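/- Let H be a real Hilbert space and let the index set {1,…,t} be partitioned into H₀ slices I₁,…,I_{H₀} with |I_h| = n_h > 0. Let φ_i, φ̃_i ∈ H with ‖φ_i‖ ≤ M₀ and ‖φ̃_i - φ_i‖² ≤ ν. Define slice means ψ_h = (1/n_h)∑_{i∈I_h} φ_i and ψ̃_h = (1/n_h)∑_{i∈I_h} φ̃_i, and Γ̂ = ∑_h (n_h/t) ψ_h ⊗ ψ_h, Γ̃ = ∑_h (n_h/t) ψ̃_h ⊗ ψ̃_h. Then ‖Γ̃ - Γ̂‖_HS ≤ ν + 2 M₀ √ν. -/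

import Mathlib

open scoped RealInnerProductSpace ENNReal
open Finset

variable {H : Type*} [NormedAddCommGroup H] [InnerProductSpace ℝ H]

noncomputable def rankOne (x y : H) : H →L[ℝ] H :=
  (innerSL ℝ y).smulRight x

noncomputable def hsNorm {ι : Type*} (b : HilbertBasis ι ℝ H) (T : H →L[ℝ] H) : ℝ :=
  Real.sqrt (∑' i, ‖T (b i)‖ ^ 2)

section HS
variable [CompleteSpace H] {ι : Type*} (b : HilbertBasis ι ℝ H)

lemma memℓp_rankOne (x y : H) : Memℓp (fun i => rankOne x y (b i)) 2 := by
  apply memℓp_gen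
  have h := ((lp.memℓp (b.repr y)).summable (p := 2) (by norm_num)).mul_right (‖x‖ ^ ((2:ℝ≥0∞).toReal))
  classical
  refine h.congr fun i => ?_
  simp only [rankOne, ContinuousLinearMap.smulRight_apply, innerSL_apply_apply]
  rw [norm_smul, Real.mul_rpow (norm_nonneg _) (norm_nonneg _)]
  congr 2
  have hb : (b.repr.symm (lp.single 2 i 1) : H) = b i := rfl
  rw [real_inner_comm, ← b.repr_apply_apply]

lemma hsNorm_eq_norm (T : H →L[ℝ] H) (hT : Memℓp (fun i => T (b i)) 2) :
    hsNorm b T = ‖(⟨fun i => T (b i), hT⟩ : lp (fun _ : ι => H) 2)‖ := by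
  have h := lp.norm_rpow_eq_tsum (p := 2) (by norm_num)
    (⟨fun i => T (b i), hT⟩ : lp (fun _ : ι => H) 2)
  rw [hsNorm]
  have h2 : ((2:ℝ≥0∞).toReal) = ((2:ℕ):ℝ) := by norm_num
  simp_rw [h2, Real.rpow_natCast] at h
  rw [show (fun i => ‖T (b i)‖ ^ 2) = fun i => ‖(⟨fun i => T (b i), hT⟩ : lp (fun _ : ι => H) 2) i‖ ^ 2 from rfl, ← h,
    Real.sqrt_sq (norm_nonneg _)]
end HS

section HS2
variable [CompleteSpace H] {ι : Type*} (b : HilbertBasis ι ℝ H)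

omit [CompleteSpace H] in
lemma hsNorm_rankOne (x y : H) : hsNorm b (rankOne x y) = ‖x‖ * ‖y‖ := by
  classical
  have key : ∀ i, ‖rankOne x y (b i)‖ ^ 2 = ‖x‖ ^ 2 * ‖b.repr y i‖ ^ 2 := by
    intro i
    simp only [rankOne, ContinuousLinearMap.smulRight_apply, innerSL_apply_apply]
    rw [norm_smul, mul_pow]
    rw [show (inner ℝ y (b i) : ℝ) = inner ℝ (b i) y from real_inner_comm _ _,
      ← b.repr_apply_apply]
    ring
  rw [hsNorm]
  simp_rw [key]
  rw [tsum_mul_left]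
  have hy : ∑' i, ‖b.repr y i‖ ^ 2 = ‖y‖ ^ 2 := by
    have h := lp.norm_rpow_eq_tsum (p := 2) (by norm_num) (b.repr y)
    have h2 : ((2:ℝ≥0∞).toReal) = ((2:ℕ):ℝ) := by norm_num
    simp_rw [h2, Real.rpow_natCast] at h
    rw [← h, b.repr.norm_map]
  rw [hy, Real.sqrt_mul (by positivity), Real.sqrt_sq (norm_nonneg _),
    Real.sqrt_sq (norm_nonneg _)]

lemma memℓp_add_op {S T : H →L[ℝ] H} (hS : Memℓp (fun i => S (b i)) 2)
    (hT : Memℓp (fun i => T (b i)) 2) : Memℓp (fun i => (S + T) (b i)) 2 :=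
  hS.add hT

lemma hsNorm_add_le {S T : H →L[ℝ] H} (hS : Memℓp (fun i => S (b i)) 2)
    (hT : Memℓp (fun i => T (b i)) 2) :
    hsNorm b (S + T) ≤ hsNorm b S + hsNorm b T := by
  rw [hsNorm_eq_norm b _ (memℓp_add_op b hS hT), hsNorm_eq_norm b _ hS, hsNorm_eq_norm b _ hT]
  have : (⟨fun i => (S + T) (b i), memℓp_add_op b hS hT⟩ : lp (fun _ : ι => H) 2)
      = ⟨fun i => S (b i), hS⟩ + ⟨fun i => T (b i), hT⟩ := rfl
  rw [this]
  exact norm_add_le _ _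

lemma memℓp_sum_op {α : Type*} (s : Finset α) (A : α → H →L[ℝ] H)
    (hA : ∀ a ∈ s, Memℓp (fun i => A a (b i)) 2) :
    Memℓp (fun i => (∑ a ∈ s, A a) (b i)) 2 := by
  classical
  induction s using Finset.induction_on with
  | empty => simpa using (zero_mem_ℓp' (p := 2) (E := fun _ : ι => H))
  | insert _ _ ha ih =>
    rw [Finset.sum_insert ha]
    exact memℓp_add_op b (hA _ (Finset.mem_insert_self _ _))
      (ih fun a has => hA a (Finset.mem_insert_of_mem has))

lemma hsNorm_sum_le {α : Type*} (s : Finset α) (A : α → H →L[ℝ] H)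
    (hA : ∀ a ∈ s, Memℓp (fun i => A a (b i)) 2) :
    hsNorm b (∑ a ∈ s, A a) ≤ ∑ a ∈ s, hsNorm b (A a) := by
  classical
  induction s using Finset.induction_on with
  | empty => simp [hsNorm]
  | insert _ _ ha ih =>
    rw [Finset.sum_insert ha, Finset.sum_insert ha]
    refine (hsNorm_add_le b (hA _ (Finset.mem_insert_self _ _))
      (memℓp_sum_op b _ _ fun a has => hA a (Finset.mem_insert_of_mem has))).trans ?_
    exact add_le_add le_rfl (ih fun a has => hA a (Finset.mem_insert_of_mem has))

end HS2

lemma smul_rankOne (c : ℝ) (x y : H) : c • rankOne x y = rankOne (c • x) y := by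
  ext w
  simp [rankOne, smul_smul, mul_comm]

lemma rankOne_sub_sub (a c : H) :
    rankOne a a - rankOne c c
      = rankOne (a - c) (a - c) + rankOne (a - c) c + rankOne c (a - c) := by
  ext w
  simp only [rankOne, ContinuousLinearMap.sub_apply, ContinuousLinearMap.add_apply,
    ContinuousLinearMap.smulRight_apply, innerSL_apply_apply, inner_sub_left, sub_smul, smul_sub]
  module

lemma mean_norm_le {α : Type*} (s : Finset α) (f : α → H) (C : ℝ) (hC : 0 ≤ C)
    (hf : ∀ i ∈ s, ‖f i‖ ≤ C) : ‖(s.card : ℝ)⁻¹ • ∑ i ∈ s, f i‖ ≤ C := by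
  rcases s.eq_empty_or_nonempty with rfl | hs
  · simpa using hC
  have hn : (0:ℝ) < s.card := by exact_mod_cast hs.card_pos
  rw [norm_smul, norm_inv, Real.norm_natCast]
  have h1 : ‖∑ i ∈ s, f i‖ ≤ (s.card : ℝ) * C := by
    refine (norm_sum_le _ _).trans ?_
    calc ∑ i ∈ s, ‖f i‖ ≤ ∑ _i ∈ s, C := Finset.sum_le_sum hf
      _ = (s.card : ℝ) * C := by rw [Finset.sum_const, nsmul_eq_mul]
  calc (s.card : ℝ)⁻¹ * ‖∑ i ∈ s, f i‖ ≤ (s.card : ℝ)⁻¹ * ((s.card : ℝ) * C) :=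
        mul_le_mul_of_nonneg_left h1 (inv_nonneg.2 hn.le)
    _ = C := by field_simp

theorem sliced_mean_dictionary_error [CompleteSpace H] {ι : Type*} (b : HilbertBasis ι ℝ H)
    {t H₀ : ℕ} (ht : 0 < t)
    (slice : Fin t → Fin H₀)
    (nh : Fin H₀ → ℕ) (hnh : ∀ h, nh h = (univ.filter fun i => slice i = h).card)
    (hpos : ∀ h, 0 < nh h)
    (φ φtil : Fin t → H) (M₀ ν : ℝ) (hν : 0 ≤ ν)
    (hφ : ∀ i, ‖φ i‖ ≤ M₀) (hres : ∀ i, ‖φtil i - φ i‖ ^ 2 ≤ ν)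
    (ψ ψtil : Fin H₀ → H)
    (hψ : ∀ h, ψ h = (nh h : ℝ)⁻¹ • ∑ i ∈ univ.filter fun i => slice i = h, φ i)
    (hψtil : ∀ h, ψtil h = (nh h : ℝ)⁻¹ • ∑ i ∈ univ.filter fun i => slice i = h, φtil i)
    (Ghat Gtil : H →L[ℝ] H)
    (hGhat : Ghat = ∑ h, ((nh h : ℝ) / t) • rankOne (ψ h) (ψ h))
    (hGtil : Gtil = ∑ h, ((nh h : ℝ) / t) • rankOne (ψtil h) (ψtil h)) :
    hsNorm b (Gtil - Ghat) ≤ ν + 2 * M₀ * Real.sqrt ν := by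
  classical
  set c : Fin H₀ → ℝ := fun h => (nh h : ℝ) / t with hc
  have hcpos : ∀ h, 0 ≤ c h := fun h => by positivity
  set d : Fin H₀ → H := fun h => ψtil h - ψ h with hd
  have hM : 0 ≤ M₀ := le_trans (norm_nonneg _) (hφ ⟨0, ht⟩)
  have hsq : 0 ≤ Real.sqrt ν := Real.sqrt_nonneg ν
  -- norm bounds
  have hψnorm : ∀ h, ‖ψ h‖ ≤ M₀ := by
    intro h
    rw [hψ h, hnh h]
    exact mean_norm_le _ _ _ hM fun i _ => hφ i
  have hdnorm : ∀ h, ‖d h‖ ≤ Real.sqrt ν := by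
    intro h
    have hform : d h = ((univ.filter fun i => slice i = h).card : ℝ)⁻¹ •
        ∑ i ∈ univ.filter fun i => slice i = h, (φtil i - φ i) := by
      rw [hd]
      simp only [hψ h, hψtil h, hnh h, ← smul_sub, Finset.sum_sub_distrib]
    rw [hform]
    refine mean_norm_le _ _ _ hsq fun i _ => ?_
    calc ‖φtil i - φ i‖ = Real.sqrt (‖φtil i - φ i‖ ^ 2) :=
          (Real.sqrt_sq (norm_nonneg _)).symm
      _ ≤ Real.sqrt ν := Real.sqrt_le_sqrt (hres i)
  have hd2 : ∀ h, ‖d h‖ ^ 2 ≤ ν := by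
    intro h
    calc ‖d h‖ ^ 2 ≤ Real.sqrt ν ^ 2 := by
          have := hdnorm h; nlinarith [norm_nonneg (d h)]
      _ = ν := Real.sq_sqrt hν
  -- sum of weights is 1
  have hsumc : ∑ h, c h = 1 := by
    have hcard : ∑ h, (nh h : ℕ) = t := by
      have := Finset.card_eq_sum_card_fiberwise
        (f := slice) (s := (univ : Finset (Fin t))) (t := (univ : Finset (Fin H₀)))
        (fun i _ => mem_univ _)
      simp only [Finset.card_univ, Fintype.card_fin] at this
      calc ∑ h, nh h = ∑ h, (univ.filter fun i => slice i = h).card :=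
            Finset.sum_congr rfl fun h _ => hnh h
        _ = t := this.symm
    have ht' : (t : ℝ) ≠ 0 := by positivity
    rw [hc]
    simp only [div_eq_mul_inv, ← Finset.sum_mul]
    rw [← Nat.cast_sum, hcard, mul_inv_cancel₀ ht']
  -- decomposition
  have hG : Gtil - Ghat = ∑ h, (rankOne (c h • d h) (d h)
      + (rankOne (c h • d h) (ψ h) + rankOne (c h • ψ h) (d h))) := by
    rw [hGtil, hGhat, ← Finset.sum_sub_distrib]
    refine Finset.sum_congr rfl fun h _ => ?_
    rw [← smul_sub, rankOne_sub_sub, smul_add, smul_add, smul_rankOne, smul_rankOne,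
      smul_rankOne]
    abel
  rw [hG]
  have hmem : ∀ (x y : H), Memℓp (fun i => rankOne x y (b i)) 2 := memℓp_rankOne b
  calc hsNorm b (∑ h, (rankOne (c h • d h) (d h)
        + (rankOne (c h • d h) (ψ h) + rankOne (c h • ψ h) (d h))))
      ≤ ∑ h, hsNorm b (rankOne (c h • d h) (d h)
        + (rankOne (c h • d h) (ψ h) + rankOne (c h • ψ h) (d h))) := by
        refine hsNorm_sum_le b _ _ fun h _ => ?_
        exact memℓp_add_op b (hmem _ _) (memℓp_add_op b (hmem _ _) (hmem _ _))
    _ ≤ ∑ h, c h * (ν + 2 * M₀ * Real.sqrt ν) := by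
        refine Finset.sum_le_sum fun h _ => ?_
        have step : hsNorm b (rankOne (c h • d h) (d h)
            + (rankOne (c h • d h) (ψ h) + rankOne (c h • ψ h) (d h)))
            ≤ ‖c h • d h‖ * ‖d h‖ + (‖c h • d h‖ * ‖ψ h‖ + ‖c h • ψ h‖ * ‖d h‖) := by
          refine le_trans (hsNorm_add_le b (hmem _ _) (memℓp_add_op b (hmem _ _) (hmem _ _))) ?_
          rw [hsNorm_rankOne]
          refine add_le_add le_rfl ?_
          refine le_trans (hsNorm_add_le b (hmem _ _) (hmem _ _)) ?_
          rw [hsNorm_rankOne, hsNorm_rankOne]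
        refine step.trans ?_
        rw [norm_smul, norm_smul, Real.norm_eq_abs, abs_of_nonneg (hcpos h)]
        have h1 := hdnorm h; have h2 := hψnorm h; have h3 := hd2 h
        have h4 := norm_nonneg (d h); have h5 := norm_nonneg (ψ h)
        have h6 := hcpos h
        nlinarith [mul_le_mul h1 h2 h5 hsq, mul_le_mul h2 h1 h4 hM]
    _ = ν + 2 * M₀ * Real.sqrt ν := by
        rw [← Finset.sum_mul, hsumc, one_mul]
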